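/- Let n be a positive natural number. There exist a real Banach space E of dimension n and bounded linear operators A : C[0,1] → E and B : E → L¹(0,1) such that A ∘ V ∘ B is the identity map on E and ‖A‖ · ‖B‖ ≤ 2n−1. (Consequently the n-th isomorphism number of V satisfies i_n(V) ≥ 1/(2n−1).) Concretely, one may take E = ℝⁿ with norm ‖y‖ = 2|y₁| + ⋯ + 2|y_{n−1}| + |y_n|, A(f)_k = (2n−1) f((2k−1)/(2n−1)) for 1 ≤ k ≤ n, and B(y) = ∑_{k=1}^{n−1} y_k (χ_{I_{2k−1}} − χ_{I_{2k}}) + y_n χ_{I_{2n−1}}, where I_k = [(k−1)/(2n−1), k/(2n−1)]. -/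

import Mathlib

open MeasureTheory
open scoped ENNReal

noncomputable section

/-- The space `L¹(0,1)` of Lebesgue integrable functions on `(0,1)`. -/
abbrev L1 : Type := Lp ℝ 1 ((volume : Measure ℝ).restrict (Set.Ioo (0:ℝ) 1))

/-- The space `C[0,1]` of continuous real functions on `[0,1]` with the supremum norm. -/
abbrev C01 : Type := C(Set.Icc (0:ℝ) 1, ℝ)

/-- `V` is the Volterra operator: `(V f)(t) = ∫₀ᵗ f(s) ds` for `f ∈ L¹(0,1)`. -/
def IsVolterra (V : L1 →L[ℝ] C01) : Prop :=
  ∀ f : L1, ∀ t : Set.Icc (0:ℝ) 1,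
    V f t = ∫ s in Set.Ioo (0:ℝ) (t:ℝ), f s
      ∂((volume : Measure ℝ).restrict (Set.Ioo (0:ℝ) 1))

namespace VolterraProof

abbrev μr : Measure ℝ := (volume : Measure ℝ).restrict (Set.Ioo (0:ℝ) 1)

instance : IsFiniteMeasure μr := by
  constructor
  rw [Measure.restrict_apply_univ, Real.volume_Ioo]
  exact ENNReal.ofReal_lt_top

/-- `ℝⁿ` with the `ℓ¹` norm. -/
abbrev En (n : ℕ) : Type := PiLp 1 (fun _ : Fin n => ℝ)

lemma finrank_En (n : ℕ) : Module.finrank ℝ (En n) = n := by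
  simp [En, PiLp, WithLp]
  rw [LinearEquiv.finrank_eq (WithLp.linearEquiv 1 ℝ (Fin n → ℝ))]
  simp

/-- the `k`-th subinterval -/
abbrev S (n k : ℕ) : Set ℝ := Set.Ioo ((k : ℝ)/n) (((k : ℝ)+1)/n)

lemma meas_S (n k : ℕ) (hn : 0 < n) (hk : k + 1 ≤ n) :
    μr (S n k) = ENNReal.ofReal (1/(n:ℝ)) := by
  have hn' : (0:ℝ) < n := by exact_mod_cast hn
  have hsub : S n k ⊆ Set.Ioo (0:ℝ) 1 := by
    intro x hx
    constructor
    · exact lt_of_le_of_lt (by positivity) hx.1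
    · refine lt_of_lt_of_le hx.2 ?_
      rw [div_le_one hn']
      exact_mod_cast hk
  rw [Measure.restrict_apply measurableSet_Ioo, Set.inter_eq_left.mpr hsub,
    Real.volume_Ioo]
  congr 1
  field_simp
  ring

/-- the indicator element `n · χ_{S n k}` of `L¹`. -/
def g (n k : ℕ) : L1 :=
  indicatorConstLp 1 measurableSet_Ioo (measure_ne_top μr (S n k)) (n : ℝ)

lemma norm_g (n k : ℕ) (hn : 0 < n) (hk : k + 1 ≤ n) : ‖g n k‖ = 1 := by
  have hn' : (0:ℝ) < n := by exact_mod_cast hn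
  rw [g, norm_indicatorConstLp one_ne_zero ENNReal.one_ne_top, measureReal_def, meas_S n k hn hk]
  rw [ENNReal.toReal_ofReal (by positivity)]
  simp only [ENNReal.toReal_one, div_one, Real.norm_natCast]
  rw [Real.rpow_one]
  field_simp

/-- the sample point `min(k/n, 1)` -/
def pt (n k : ℕ) : Set.Icc (0:ℝ) 1 :=
  ⟨min ((k:ℝ)/n) 1, le_min (by positivity) zero_le_one, min_le_right _ _⟩

lemma pt_coe (n k : ℕ) (hn : 0 < n) (hk : k ≤ n) : (pt n k : ℝ) = (k:ℝ)/n := by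
  have hn' : (0:ℝ) < n := by exact_mod_cast hn
  simp only [pt]
  rw [min_eq_left]
  rw [div_le_one hn']
  exact_mod_cast hk

def Blin (n : ℕ) : En n →ₗ[ℝ] L1 where
  toFun y := ∑ k : Fin n, y k • g n (k : ℕ)
  map_add' y z := by
    simp [add_smul, Finset.sum_add_distrib]
  map_smul' c y := by
    simp [smul_smul, Finset.smul_sum]

lemma norm_Blin_le (n : ℕ) (hn : 0 < n) (y : En n) : ‖Blin n y‖ ≤ 1 * ‖y‖ := by
  rw [one_mul]
  calc ‖Blin n y‖ = ‖∑ k : Fin n, y k • g n (k:ℕ)‖ := rfl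
    _ ≤ ∑ k : Fin n, ‖y k • g n (k:ℕ)‖ := norm_sum_le _ _
    _ = ∑ k : Fin n, ‖y k‖ := by
        refine Finset.sum_congr rfl fun k _ => ?_
        rw [norm_smul, norm_g n k hn k.2, mul_one]
    _ = ‖y‖ := by
        rw [PiLp.norm_eq_sum (p := 1) (by norm_num)]
        simp [Real.rpow_one]

def Bc (n : ℕ) (hn : 0 < n) : En n →L[ℝ] L1 :=
  LinearMap.mkContinuous (Blin n) 1 (norm_Blin_le n hn)

def Alin (n : ℕ) : C01 →ₗ[ℝ] En n where
  toFun f := WithLp.toLp 1 fun k : Fin n =>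
    f (pt n ((k:ℕ)+1)) - (if (k:ℕ) = 0 then 0 else f (pt n (k:ℕ)))
  map_add' f g := by
    ext k
    by_cases h : (k:ℕ) = 0 <;> simp [h] <;> ring
  map_smul' c f := by
    ext k
    by_cases h : (k:ℕ) = 0 <;> simp [h] <;> ring

lemma sum_ite_zero (n : ℕ) (hn : 0 < n) :
    ∑ k : Fin n, (if (k:ℕ) = 0 then (1:ℝ) else 2) = 2*n - 1 := by
  obtain ⟨m, rfl⟩ : ∃ m, n = m + 1 := ⟨n - 1, by omega⟩
  rw [Fin.sum_univ_succ]
  simp only [Fin.val_zero, Fin.val_succ, Nat.succ_ne_zero, if_true, if_false,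
    Nat.add_eq_zero, reduceIte, Finset.sum_const, Finset.card_univ, Fintype.card_fin,
    nsmul_eq_mul]
  push_cast
  ring

lemma norm_Alin_le (n : ℕ) (hn : 0 < n) (f : C01) :
    ‖Alin n f‖ ≤ (2*n - 1) * ‖f‖ := by
  rw [PiLp.norm_eq_sum (p := 1) (by norm_num)]
  simp only [ENNReal.toReal_one, Real.rpow_one, one_div_one]
  calc (∑ k : Fin n, ‖Alin n f k‖)
      ≤ ∑ k : Fin n, (if (k:ℕ) = 0 then (1:ℝ) else 2) * ‖f‖ := by
        refine Finset.sum_le_sum fun k _ => ?_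
        by_cases h : (k:ℕ) = 0
        · simp only [Alin, LinearMap.coe_mk, AddHom.coe_mk, PiLp.toLp_apply, h, if_true, reduceIte,
            sub_zero, one_mul]
          exact ContinuousMap.norm_coe_le_norm f _
        · simp only [Alin, LinearMap.coe_mk, AddHom.coe_mk, PiLp.toLp_apply, if_neg h]
          calc ‖f (pt n ((k:ℕ)+1)) - f (pt n (k:ℕ))‖
              ≤ ‖f (pt n ((k:ℕ)+1))‖ + ‖f (pt n (k:ℕ))‖ := norm_sub_le _ _
            _ ≤ ‖f‖ + ‖f‖ := add_le_add (ContinuousMap.norm_coe_le_norm f _)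
                (ContinuousMap.norm_coe_le_norm f _)
            _ = 2 * ‖f‖ := by ring
    _ = (2*n - 1) * ‖f‖ := by rw [← Finset.sum_mul, sum_ite_zero n hn]

def Ac (n : ℕ) (hn : 0 < n) : C01 →L[ℝ] En n :=
  LinearMap.mkContinuous (Alin n) (2*n - 1) (norm_Alin_le n hn)

lemma Lp_coeFn_sum {ι : Type*} (s : Finset ι) (f : ι → L1) :
    ⇑(∑ i ∈ s, f i) =ᵐ[μr] fun x => ∑ i ∈ s, f i x := by
  classical
  induction s using Finset.induction_on with
  | empty => simp only [Finset.sum_empty]; exact Lp.coeFn_zero ℝ 1 μr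
  | insert a s' h ih =>
    rw [Finset.sum_insert h]
    filter_upwards [Lp.coeFn_add (f a) (∑ i ∈ s', f i), ih] with x hx hx'
    simp only [Pi.add_apply] at hx
    rw [hx, hx', Finset.sum_insert h]

lemma g_coeFn (n k : ℕ) : ⇑(g n k) =ᵐ[μr] (S n k).indicator (fun _ => (n:ℝ)) :=
  indicatorConstLp_coeFn

lemma VB_at (n : ℕ) (hn : 0 < n) (V : L1 →L[ℝ] C01) (hV : IsVolterra V)
    (y : En n) (M : ℕ) (hM : M ≤ n) :
    V (Bc n hn y) (pt n M) = ∑ j : Fin n, (if (j:ℕ) < M then y j else 0) := by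
  have hn' : (0:ℝ) < n := by exact_mod_cast hn
  rw [hV (Bc n hn y) (pt n M), pt_coe n M hn hM]
  have hBy : ⇑(Bc n hn y) =ᵐ[μr]
      fun s => ∑ j : Fin n, y j • (S n (j:ℕ)).indicator (fun _ => (n:ℝ)) s := by
    have h1 : (Bc n hn y : L1) = ∑ j : Fin n, y j • g n (j:ℕ) := rfl
    rw [h1]
    have h2 : ∀ᵐ x ∂μr, ∀ j : Fin n,
        (y j • g n (j:ℕ) : L1) x = y j • (S n (j:ℕ)).indicator (fun _ => (n:ℝ)) x := by
      rw [ae_all_iff]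
      intro j
      filter_upwards [Lp.coeFn_smul (y j) (g n (j:ℕ)), g_coeFn n (j:ℕ)] with x ha hb
      rw [ha, Pi.smul_apply, hb]
    filter_upwards [Lp_coeFn_sum Finset.univ (fun j : Fin n => y j • g n (j:ℕ)), h2]
      with x hx hx2
    rw [hx]
    exact Finset.sum_congr rfl fun j _ => hx2 j
  rw [integral_congr_ae (ae_restrict_of_ae hBy)]
  rw [show (∫ s in Set.Ioo (0:ℝ) ((M:ℝ)/n),
        ∑ j : Fin n, y j • (S n (j:ℕ)).indicator (fun _ => (n:ℝ)) s ∂μr)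
      = ∑ j : Fin n, ∫ s in Set.Ioo (0:ℝ) ((M:ℝ)/n),
          y j • (S n (j:ℕ)).indicator (fun _ => (n:ℝ)) s ∂μr from
    integral_finset_sum _ (fun j _ =>
      (((integrable_const (n:ℝ)).indicator measurableSet_Ioo).smul (y j)))]
  refine Finset.sum_congr rfl fun j _ => ?_
  rw [integral_smul, integral_indicator_const _ measurableSet_Ioo,
    measureReal_restrict_apply measurableSet_Ioo]
  by_cases hjM : (j:ℕ) < M
  · rw [if_pos hjM]
    have hsub : S n (j:ℕ) ⊆ Set.Ioo (0:ℝ) ((M:ℝ)/n) := by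
      intro x hx
      refine ⟨lt_of_le_of_lt (by positivity) hx.1, lt_of_lt_of_le hx.2 ?_⟩
      have hjM' : ((j:ℕ):ℝ) + 1 ≤ (M:ℝ) := by exact_mod_cast hjM
      gcongr
    rw [Set.inter_eq_left.mpr hsub, measureReal_def, meas_S n (j:ℕ) hn (le_trans hjM hM),
      ENNReal.toReal_ofReal (by positivity)]
    rw [smul_eq_mul, smul_eq_mul]
    field_simp
  · rw [if_neg hjM]
    have hempty : S n (j:ℕ) ∩ Set.Ioo (0:ℝ) ((M:ℝ)/n) = ∅ := by
      rw [Set.eq_empty_iff_forall_notMem]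
      rintro x ⟨hx1, hx2⟩
      have hMj : (M:ℝ)/n ≤ ((j:ℕ):ℝ)/n := by
        have : (M:ℝ) ≤ ((j:ℕ):ℝ) := by exact_mod_cast Nat.le_of_not_lt hjM
        gcongr
      exact absurd (hx2.2.trans_le hMj) (not_lt.mpr hx1.1.le)
    rw [hempty]
    simp

lemma sum_window (n : ℕ) (y : Fin n → ℝ) (k : Fin n) :
    (∑ j : Fin n, if (j:ℕ) < (k:ℕ)+1 then y j else 0)
      - (∑ j : Fin n, if (j:ℕ) < (k:ℕ) then y j else 0) = y k := by
  rw [← Finset.sum_sub_distrib]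
  have h : ∀ j : Fin n,
      ((if (j:ℕ) < (k:ℕ)+1 then y j else 0) - (if (j:ℕ) < (k:ℕ) then y j else 0))
        = if j = k then y j else 0 := by
    intro j
    rcases lt_trichotomy ((j:ℕ)) ((k:ℕ)) with h1 | h1 | h1
    · rw [if_pos (by omega), if_pos h1, if_neg (by rw [Fin.ext_iff]; omega)]
      ring
    · rw [if_pos (by omega), if_neg (by omega), if_pos (by rw [Fin.ext_iff]; omega)]
      ring
    · rw [if_neg (by omega), if_neg (by omega), if_neg (by rw [Fin.ext_iff]; omega)]
      ring
  rw [Finset.sum_congr rfl fun j _ => h j, Finset.sum_ite_eq' Finset.univ k y]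
  simp

end VolterraProof

open VolterraProof in
/-- Lower bound for the isomorphism numbers of the Volterra operator: there exist an
`n`-dimensional Banach space `E` and bounded operators `A : C[0,1] → E`, `B : E → L¹(0,1)`
with `A ∘ V ∘ B = id_E` and `‖A‖ ⬝ ‖B‖ ≤ 2n - 1`. -/
theorem isomorphism_factorization_volterra (n : ℕ) (hn : 1 ≤ n)
    (V : L1 →L[ℝ] C01) (hV : IsVolterra V) :
    ∃ (E : Type) (_ : NormedAddCommGroup E) (_ : NormedSpace ℝ E) (_ : CompleteSpace E),
      Module.finrank ℝ E = n ∧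
      ∃ (A : C01 →L[ℝ] E) (B : E →L[ℝ] L1),
        A.comp (V.comp B) = ContinuousLinearMap.id ℝ E ∧ ‖A‖ * ‖B‖ ≤ 2 * n - 1 := by
  have hn0 : 0 < n := hn
  refine ⟨En n, inferInstance, inferInstance, inferInstance, finrank_En n,
    Ac n hn0, Bc n hn0, ?_, ?_⟩
  · apply ContinuousLinearMap.ext
    intro y
    simp only [ContinuousLinearMap.comp_apply, ContinuousLinearMap.id_apply]
    ext k
    show (V ((Bc n hn0) y)) (pt n ((k:ℕ)+1))
        - (if (k:ℕ) = 0 then 0 else (V ((Bc n hn0) y)) (pt n (k:ℕ))) = y k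
    by_cases hk : (k:ℕ) = 0
    · rw [if_pos hk, VB_at n hn0 V hV y ((k:ℕ)+1) k.2]
      have h := sum_window n y k
      rw [show (∑ j : Fin n, if (j:ℕ) < (k:ℕ) then y j else 0) = 0 from by simp [hk]] at h
      simpa using h
    · rw [if_neg hk, VB_at n hn0 V hV y ((k:ℕ)+1) k.2,
        VB_at n hn0 V hV y (k:ℕ) k.2.le]
      exact sum_window n y k
  · have hA : ‖Ac n hn0‖ ≤ 2*n - 1 := by
      apply LinearMap.mkContinuous_norm_le
      have : (1:ℝ) ≤ n := by exact_mod_cast hn0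
      linarith
    have hB : ‖Bc n hn0‖ ≤ 1 :=
      LinearMap.mkContinuous_norm_le _ zero_le_one _
    calc ‖Ac n hn0‖ * ‖Bc n hn0‖ ≤ (2*n - 1) * 1 :=
          mul_le_mul hA hB (norm_nonneg _) (by
            have : (1:ℝ) ≤ n := by exact_mod_cast hn0
            linarith)
      _ = 2*n - 1 := mul_one _
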